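/- Let S and A be finite nonempty types, let P : S → A → S → ℝ satisfy P s a s' ≥ 0 and ∑_{s'} P s a s' = 1 for all s, a, let r : S → A → S → ℝ be a reward function, and let γ ∈ ℝ with 0 ≤ γ < 1. Then there exists a unique function V* : S → ℝ satisfying the Bellman optimality equation V*(s) = max over a ∈ A of ∑_{s'} P s a s' · (r s a s' + γ · V*(s')) for all s ∈ S. -/

import Mathlib

open Finset

/-- **Existence and uniqueness of the optimal value function.** For a finite discounted
MDP with transition kernel `P` (nonnegative, summing to one), rewards `r`, and discount
`0 ≤ γ < 1`, there exists a unique `V* : S → ℝ` satisfying the Bellman optimality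
equation `V*(s) = max_a ∑_{s'} P s a s' * (r s a s' + γ V*(s'))` for all `s`. -/
theorem bellman_fixed_point_exists_unique {S A : Type*} [Fintype S] [Nonempty S]
    [Fintype A] [Nonempty A]
    (P : S → A → S → ℝ) (hP0 : ∀ s a s', 0 ≤ P s a s')
    (hP1 : ∀ s a, ∑ s', P s a s' = 1)
    (r : S → A → S → ℝ) (γ : ℝ) (hγ0 : 0 ≤ γ) (hγ1 : γ < 1) :
    ∃! Vstar : S → ℝ, ∀ s, Vstar s =
      univ.sup' univ_nonempty (fun a => ∑ s', P s a s' * (r s a s' + γ * Vstar s')) := by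
  classical
  set T : (S → ℝ) → (S → ℝ) := fun V s =>
    univ.sup' univ_nonempty (fun a => ∑ s', P s a s' * (r s a s' + γ * V s')) with hT
  -- auxiliary: sup' difference bound
  have sup_sub_le : ∀ (f g : A → ℝ) (b : ℝ), (∀ a, f a ≤ g a + b) →
      univ.sup' univ_nonempty f ≤ univ.sup' univ_nonempty g + b := by
    intro f g b h
    exact Finset.sup'_le _ _ fun a _ =>
      (h a).trans (add_le_add_left (Finset.le_sup' g (mem_univ a)) b)
  -- pointwise bound for each action
  have hact : ∀ (V W : S → ℝ) (s : S) (a : A),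
      (∑ s', P s a s' * (r s a s' + γ * V s')) ≤
      (∑ s', P s a s' * (r s a s' + γ * W s')) + γ * dist V W := by
    intro V W s a
    have h1 : ∀ s', P s a s' * (r s a s' + γ * V s') -
        P s a s' * (r s a s' + γ * W s') = γ * (P s a s' * (V s' - W s')) := by
      intro s'; ring
    have h2 : (∑ s', P s a s' * (r s a s' + γ * V s')) -
        (∑ s', P s a s' * (r s a s' + γ * W s')) = γ * ∑ s', P s a s' * (V s' - W s') := by
      rw [← Finset.sum_sub_distrib]
      simp_rw [h1]
      rw [Finset.mul_sum]
    have h3 : (∑ s', P s a s' * (V s' - W s')) ≤ dist V W := by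
      calc (∑ s', P s a s' * (V s' - W s')) ≤ ∑ s', P s a s' * dist V W := by
            apply Finset.sum_le_sum
            intro s' _
            apply mul_le_mul_of_nonneg_left _ (hP0 s a s')
            calc V s' - W s' ≤ |V s' - W s'| := le_abs_self _
              _ = dist (V s') (W s') := (Real.dist_eq _ _).symm
              _ ≤ dist V W := dist_le_pi_dist V W s'
        _ = dist V W := by rw [← Finset.sum_mul, hP1 s a, one_mul]
    have := mul_le_mul_of_nonneg_left h3 hγ0
    linarith [h2]
  have key : ∀ V W : S → ℝ, dist (T V) (T W) ≤ γ * dist V W := by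
    intro V W
    rw [dist_pi_le_iff (mul_nonneg hγ0 dist_nonneg)]
    intro s
    rw [Real.dist_eq, abs_sub_le_iff]
    constructor
    · have := sup_sub_le _ _ (γ * dist V W) (hact V W s)
      simp only [hT]; linarith
    · have := sup_sub_le _ _ (γ * dist W V) (hact W V s)
      rw [dist_comm W V] at this
      simp only [hT]; linarith
  have hlip : LipschitzWith γ.toNNReal T :=
    LipschitzWith.of_dist_le_mul fun V W => by
      rw [Real.coe_toNNReal γ hγ0]; exact key V W
  have hC : ContractingWith γ.toNNReal T := by
    refine ⟨?_, hlip⟩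
    rw [← NNReal.coe_lt_coe, Real.coe_toNNReal γ hγ0, NNReal.coe_one]
    exact hγ1
  have hfix : T (hC.fixedPoint T) = hC.fixedPoint T := hC.fixedPoint_isFixedPt
  refine ⟨hC.fixedPoint T, fun s => ?_, fun W hW => ?_⟩
  · conv_lhs => rw [← hfix]
  · have hWfix : T W = W := funext fun s => (hW s).symm
    have h := key W (hC.fixedPoint T)
    rw [hWfix, hfix] at h
    have h0 : dist W (hC.fixedPoint T) ≤ 0 := by nlinarith [dist_nonneg (x := W) (y := hC.fixedPoint T)]
    exact dist_le_zero.mp h0
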